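/- Let Σ be a p×p real positive semidefinite matrix, X₁,…,X_N ∈ ℝ^p, ξ₁,…,ξ_N ∈ ℝ, α* ∈ ℝ^p, and Y_i = ⟨X_i, α*⟩ + ξ_i for each i. Fix ρ > 0 and 0 < r* ≤ r. Define Q_{r*,ρ} = sup { |(1/N) Σ_{i=1}^N ⟨X_i, v⟩² − ‖Σ^{1/2}v‖₂²| : v ∈ ℝ^p, ‖v‖₂ ≤ ρ, ‖Σ^{1/2}v‖₂ ≤ r* } and M_{r*,ρ} = sup { |(2/N) Σ_{i=1}^N ξ_i ⟨X_i, v⟩| : v ∈ ℝ^p, ‖v‖₂ ≤ ρ, ‖Σ^{1/2}v‖₂ ≤ r* }. Then for every α ∈ ℝ^p with ‖α − α*‖₂ ≤ ρ and ‖Σ^{1/2}(α − α*)‖₂ = r, setting θ = r*/r ∈ (0,1], one has P_N𝓛_α ≥ θ^{−2} ((r*)² − Q_{r*,ρ}) − θ^{−1} M_{r*,ρ}. -/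

import Mathlib

open Matrix Finset

/-- The positive semidefinite square root of a positive semidefinite matrix
(the definition `Matrix.PosSemidef.sqrt` of the older Mathlib, since removed). -/
noncomputable def Matrix.PosSemidef.sqrt {n : Type*} [Fintype n] [DecidableEq n]
    {A : Matrix n n ℝ} (hA : A.PosSemidef) : Matrix n n ℝ :=
  hA.1.eigenvectorUnitary.1 * diagonal (Real.sqrt ∘ hA.1.eigenvalues) *
    (star hA.1.eigenvectorUnitary : Matrix n n ℝ)

/-- The empirical excess squared risk
`P_N𝓛_α = (1/N) Σ_i [(⟨X_i,α⟩ − Y_i)² − (⟨X_i,α*⟩ − Y_i)²]`. -/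
noncomputable def empExcessRisk {N p : ℕ} (X : Fin N → Fin p → ℝ) (Y : Fin N → ℝ)
    (αstar α : Fin p → ℝ) : ℝ :=
  (1 / (N : ℝ)) * ∑ i, ((∑ j, X i j * α j - Y i) ^ 2 - (∑ j, X i j * αstar j - Y i) ^ 2)

/-- Supremum of the (absolute) quadratic process over
`{v : ‖v‖₂ ≤ ρ, ‖Σ^{1/2}v‖₂ ≤ r*}`. -/
noncomputable def quadProcSup {N p : ℕ} (X : Fin N → Fin p → ℝ)
    (S : Matrix (Fin p) (Fin p) ℝ) (ρ rstar : ℝ) : ℝ :=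
  sSup {x : ℝ | ∃ v : Fin p → ℝ, Real.sqrt (∑ j, v j ^ 2) ≤ ρ ∧
    Real.sqrt (∑ i, (S.mulVec v i) ^ 2) ≤ rstar ∧
    x = |(1 / (N : ℝ)) * ∑ i, (∑ j, X i j * v j) ^ 2 - ∑ i, (S.mulVec v i) ^ 2|}

/-- Supremum of the (absolute) multiplier process over
`{v : ‖v‖₂ ≤ ρ, ‖Σ^{1/2}v‖₂ ≤ r*}`. -/
noncomputable def multProcSup {N p : ℕ} (X : Fin N → Fin p → ℝ) (ξ : Fin N → ℝ)
    (S : Matrix (Fin p) (Fin p) ℝ) (ρ rstar : ℝ) : ℝ :=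
  sSup {x : ℝ | ∃ v : Fin p → ℝ, Real.sqrt (∑ j, v j ^ 2) ≤ ρ ∧
    Real.sqrt (∑ i, (S.mulVec v i) ^ 2) ≤ rstar ∧
    x = |(2 / (N : ℝ)) * ∑ i, ξ i * (∑ j, X i j * v j)|}

/-- the quadratic–multiplier lower bound on the empirical excess
risk: for `α` with `‖α − α*‖₂ ≤ ρ` and `‖Σ^{1/2}(α − α*)‖₂ = r ≥ r*`, writing
`θ = r*/r`, one has `P_N𝓛_α ≥ θ⁻²((r*)² − Q_{r*,ρ}) − θ⁻¹ M_{r*,ρ}`. -/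
theorem stmt8 (N p : ℕ) (A : Matrix (Fin p) (Fin p) ℝ) (hA : A.PosSemidef)
    (X : Fin N → Fin p → ℝ) (ξ : Fin N → ℝ) (αstar : Fin p → ℝ)
    (Y : Fin N → ℝ) (hY : ∀ i, Y i = (∑ j, X i j * αstar j) + ξ i)
    (ρ rstar r : ℝ) (hρ : 0 < ρ) (hrstar : 0 < rstar) (hrr : rstar ≤ r)
    (α : Fin p → ℝ)
    (hαρ : Real.sqrt (∑ j, (α j - αstar j) ^ 2) ≤ ρ)
    (hαr : Real.sqrt (∑ i, (hA.sqrt.mulVec (fun j => α j - αstar j) i) ^ 2) = r) :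
    ((rstar / r)⁻¹) ^ 2 * (rstar ^ 2 - quadProcSup X hA.sqrt ρ rstar)
        - (rstar / r)⁻¹ * multProcSup X ξ hA.sqrt ρ rstar
      ≤ empExcessRisk X Y αstar α := by
  have hr : 0 < r := hrstar.trans_le hrr
  set S := hA.sqrt with hSdef
  set w : Fin p → ℝ := fun j => α j - αstar j with hwdef
  have hθ0 : 0 < rstar / r := div_pos hrstar hr
  have hθ1 : rstar / r ≤ 1 := (div_le_one hr).mpr hrr
  set θ := rstar / r with hθdef
  set v : Fin p → ℝ := fun j => θ * w j with hvdef
  have hw_nonneg : (0:ℝ) ≤ ∑ j, w j ^ 2 := Finset.sum_nonneg fun j _ => sq_nonneg _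
  have hw2 : ∑ j, w j ^ 2 ≤ ρ ^ 2 := by
    calc ∑ j, w j ^ 2 = Real.sqrt (∑ j, w j ^ 2) ^ 2 := (Real.sq_sqrt hw_nonneg).symm
    _ ≤ ρ ^ 2 := pow_le_pow_left₀ (Real.sqrt_nonneg _) hαρ 2
  have hv2 : ∑ j, v j ^ 2 = θ ^ 2 * ∑ j, w j ^ 2 := by
    simp [hvdef, mul_pow, Finset.mul_sum]
  have hvρ : Real.sqrt (∑ j, v j ^ 2) ≤ ρ := by
    rw [hv2, Real.sqrt_mul (sq_nonneg θ), Real.sqrt_sq hθ0.le]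
    calc θ * Real.sqrt (∑ j, w j ^ 2) ≤ 1 * ρ :=
      mul_le_mul hθ1 hαρ (Real.sqrt_nonneg _) one_pos.le
    _ = ρ := one_mul ρ
  have hSv : ∀ i, S.mulVec v i = θ * S.mulVec w i := by
    intro i
    have hv' : v = θ • w := by funext j; simp [hvdef]
    rw [hv', Matrix.mulVec_smul]; rfl
  have hSw2 : ∑ i, (S.mulVec w i) ^ 2 = r ^ 2 := by
    rw [← hαr, Real.sq_sqrt (Finset.sum_nonneg fun i _ => sq_nonneg _)]
  have hSv2 : ∑ i, (S.mulVec v i) ^ 2 = rstar ^ 2 := by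
    have : ∑ i, (S.mulVec v i) ^ 2 = θ ^ 2 * ∑ i, (S.mulVec w i) ^ 2 := by
      rw [Finset.mul_sum]
      exact Finset.sum_congr rfl fun i _ => by rw [hSv i]; ring
    rw [this, hSw2, hθdef]
    field_simp
  have hSvr : Real.sqrt (∑ i, (S.mulVec v i) ^ 2) ≤ rstar := by
    rw [hSv2, Real.sqrt_sq hrstar.le]
  -- boundedness of the Q set
  have hQbdd : BddAbove {x : ℝ | ∃ u : Fin p → ℝ, Real.sqrt (∑ j, u j ^ 2) ≤ ρ ∧
      Real.sqrt (∑ i, (S.mulVec u i) ^ 2) ≤ rstar ∧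
      x = |(1 / (N : ℝ)) * ∑ i, (∑ j, X i j * u j) ^ 2 - ∑ i, (S.mulVec u i) ^ 2|} := by
    refine ⟨|1 / (N:ℝ)| * ∑ i, (∑ j, X i j ^ 2) * ρ ^ 2 + rstar ^ 2, ?_⟩
    rintro x ⟨u, hu1, hu2, rfl⟩
    have hu_nonneg : (0:ℝ) ≤ ∑ j, u j ^ 2 := Finset.sum_nonneg fun j _ => sq_nonneg _
    have hu2' : ∑ j, u j ^ 2 ≤ ρ ^ 2 := by
      calc ∑ j, u j ^ 2 = Real.sqrt (∑ j, u j ^ 2) ^ 2 := (Real.sq_sqrt hu_nonneg).symm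
      _ ≤ ρ ^ 2 := pow_le_pow_left₀ (Real.sqrt_nonneg _) hu1 2
    have hB_nonneg : (0:ℝ) ≤ ∑ i, (S.mulVec u i) ^ 2 := Finset.sum_nonneg fun i _ => sq_nonneg _
    have hB : ∑ i, (S.mulVec u i) ^ 2 ≤ rstar ^ 2 := by
      calc ∑ i, (S.mulVec u i) ^ 2 = Real.sqrt (∑ i, (S.mulVec u i) ^ 2) ^ 2 :=
        (Real.sq_sqrt hB_nonneg).symm
      _ ≤ rstar ^ 2 := pow_le_pow_left₀ (Real.sqrt_nonneg _) hu2 2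
    have hAq : |(1 / (N:ℝ)) * ∑ i, (∑ j, X i j * u j) ^ 2|
        ≤ |1 / (N:ℝ)| * ∑ i, (∑ j, X i j ^ 2) * ρ ^ 2 := by
      rw [abs_mul]
      refine mul_le_mul_of_nonneg_left ?_ (abs_nonneg _)
      rw [abs_of_nonneg (Finset.sum_nonneg fun i _ => sq_nonneg _)]
      refine Finset.sum_le_sum fun i _ => ?_
      calc (∑ j, X i j * u j) ^ 2 ≤ (∑ j, X i j ^ 2) * ∑ j, u j ^ 2 :=
        Finset.sum_mul_sq_le_sq_mul_sq _ _ _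
      _ ≤ (∑ j, X i j ^ 2) * ρ ^ 2 :=
        mul_le_mul_of_nonneg_left hu2' (Finset.sum_nonneg fun j _ => sq_nonneg _)
    calc |(1 / (N:ℝ)) * ∑ i, (∑ j, X i j * u j) ^ 2 - ∑ i, (S.mulVec u i) ^ 2|
        ≤ |(1 / (N:ℝ)) * ∑ i, (∑ j, X i j * u j) ^ 2| + |∑ i, (S.mulVec u i) ^ 2| :=
        abs_sub _ _
    _ ≤ |1 / (N:ℝ)| * ∑ i, (∑ j, X i j ^ 2) * ρ ^ 2 + rstar ^ 2 := by
        rw [abs_of_nonneg hB_nonneg]; exact add_le_add hAq hB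
  -- boundedness of the M set
  have hMbdd : BddAbove {x : ℝ | ∃ u : Fin p → ℝ, Real.sqrt (∑ j, u j ^ 2) ≤ ρ ∧
      Real.sqrt (∑ i, (S.mulVec u i) ^ 2) ≤ rstar ∧
      x = |(2 / (N : ℝ)) * ∑ i, ξ i * (∑ j, X i j * u j)|} := by
    refine ⟨|2 / (N:ℝ)| * ∑ i, |ξ i| * Real.sqrt ((∑ j, X i j ^ 2) * ρ ^ 2), ?_⟩
    rintro x ⟨u, hu1, hu2, rfl⟩
    have hu_nonneg : (0:ℝ) ≤ ∑ j, u j ^ 2 := Finset.sum_nonneg fun j _ => sq_nonneg _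
    have hu2' : ∑ j, u j ^ 2 ≤ ρ ^ 2 := by
      calc ∑ j, u j ^ 2 = Real.sqrt (∑ j, u j ^ 2) ^ 2 := (Real.sq_sqrt hu_nonneg).symm
      _ ≤ ρ ^ 2 := pow_le_pow_left₀ (Real.sqrt_nonneg _) hu1 2
    rw [abs_mul]
    refine mul_le_mul_of_nonneg_left ?_ (abs_nonneg _)
    calc |∑ i, ξ i * (∑ j, X i j * u j)| ≤ ∑ i, |ξ i * (∑ j, X i j * u j)| :=
      Finset.abs_sum_le_sum_abs _ _
    _ ≤ ∑ i, |ξ i| * Real.sqrt ((∑ j, X i j ^ 2) * ρ ^ 2) := by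
      refine Finset.sum_le_sum fun i _ => ?_
      rw [abs_mul]
      refine mul_le_mul_of_nonneg_left ?_ (abs_nonneg _)
      rw [← Real.sqrt_sq_eq_abs]
      refine Real.sqrt_le_sqrt ?_
      calc (∑ j, X i j * u j) ^ 2 ≤ (∑ j, X i j ^ 2) * ∑ j, u j ^ 2 :=
        Finset.sum_mul_sq_le_sq_mul_sq _ _ _
      _ ≤ (∑ j, X i j ^ 2) * ρ ^ 2 :=
        mul_le_mul_of_nonneg_left hu2' (Finset.sum_nonneg fun j _ => sq_nonneg _)
  have hQ : |(1 / (N:ℝ)) * ∑ i, (∑ j, X i j * v j) ^ 2 - ∑ i, (S.mulVec v i) ^ 2|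
      ≤ quadProcSup X S ρ rstar := le_csSup hQbdd ⟨v, hvρ, hSvr, rfl⟩
  have hM : |(2 / (N:ℝ)) * ∑ i, ξ i * (∑ j, X i j * v j)|
      ≤ multProcSup X ξ S ρ rstar := le_csSup hMbdd ⟨v, hvρ, hSvr, rfl⟩
  rw [hSv2] at hQ
  -- express the empirical excess risk
  have hXv : ∀ i, ∑ j, X i j * v j = θ * ∑ j, X i j * w j := by
    intro i
    rw [Finset.mul_sum]
    exact Finset.sum_congr rfl fun j _ => by simp [hvdef]; ring
  have hE : empExcessRisk X Y αstar α
      = (1 / (N:ℝ)) * ∑ i, (∑ j, X i j * w j) ^ 2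
        - (2 / (N:ℝ)) * ∑ i, ξ i * (∑ j, X i j * w j) := by
    unfold empExcessRisk
    have key : ∀ i, (∑ j, X i j * α j - Y i) ^ 2 - (∑ j, X i j * αstar j - Y i) ^ 2
        = (∑ j, X i j * w j) ^ 2 - 2 * (ξ i * (∑ j, X i j * w j)) := by
      intro i
      have h1 : ∑ j, X i j * w j = ∑ j, X i j * α j - ∑ j, X i j * αstar j := by
        rw [← Finset.sum_sub_distrib]
        exact Finset.sum_congr rfl fun j _ => by simp [hwdef]; ring
      rw [hY i, h1]; ring
    rw [Finset.sum_congr rfl fun i _ => key i, Finset.sum_sub_distrib, ← Finset.mul_sum]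
    ring
  have hθne : θ ≠ 0 := hθ0.ne'
  have hemp : empExcessRisk X Y αstar α
      = θ⁻¹ ^ 2 * ((1 / (N:ℝ)) * ∑ i, (∑ j, X i j * v j) ^ 2)
        - θ⁻¹ * ((2 / (N:ℝ)) * ∑ i, ξ i * (∑ j, X i j * v j)) := by
    rw [hE]
    have e1 : ∑ i, (∑ j, X i j * v j) ^ 2 = θ ^ 2 * ∑ i, (∑ j, X i j * w j) ^ 2 := by
      rw [Finset.mul_sum]
      exact Finset.sum_congr rfl fun i _ => by rw [hXv i]; ring
    have e2 : ∑ i, ξ i * (∑ j, X i j * v j) = θ * ∑ i, ξ i * (∑ j, X i j * w j) := by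
      rw [Finset.mul_sum]
      exact Finset.sum_congr rfl fun i _ => by rw [hXv i]; ring
    have hgen : ∀ a b : ℝ, θ⁻¹ ^ 2 * (1 / (N:ℝ) * (θ ^ 2 * a)) - θ⁻¹ * (2 / (N:ℝ) * (θ * b))
        = 1 / (N:ℝ) * a - 2 / (N:ℝ) * b := by
      intro a b
      field_simp
    rw [e1, e2, hgen]
  rw [hemp]
  have h1 : θ⁻¹ ^ 2 * (rstar ^ 2 - quadProcSup X S ρ rstar)
      ≤ θ⁻¹ ^ 2 * ((1 / (N:ℝ)) * ∑ i, (∑ j, X i j * v j) ^ 2) := by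
    refine mul_le_mul_of_nonneg_left ?_ (sq_nonneg _)
    have := (abs_le.mp hQ).1
    linarith
  have h2 : θ⁻¹ * ((2 / (N:ℝ)) * ∑ i, ξ i * (∑ j, X i j * v j))
      ≤ θ⁻¹ * multProcSup X ξ S ρ rstar :=
    mul_le_mul_of_nonneg_left ((le_abs_self _).trans hM) (inv_nonneg.mpr hθ0.le)
  linarith
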